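/- Let x(t) = r(t)s(t) (polar coordinates, r = |x|, s = x/|x|) be a solution of the anisotropic Kepler problem with energy h, and define Γ(t) = ½ r(t)^α (2h - ṙ(t)²). Then Γ̇(t) = -((2-α)/2) r^{α+1} ṙ |ṡ|² for all t in the domain. -/

import Mathlib

open Real Set
open scoped RealInnerProductSpace

lemma euler_hom {d : ℕ} (α : ℝ)
    (U : EuclideanSpace ℝ (Fin d) → ℝ)
    (hUhom : ∀ y : EuclideanSpace ℝ (Fin d), y ≠ 0 →
      U y = ‖y‖ ^ (-α) * U (‖y‖⁻¹ • y))
    (hUC2 : ContDiffOn ℝ 2 U {y : EuclideanSpace ℝ (Fin d) | y ≠ 0})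
    (y : EuclideanSpace ℝ (Fin d)) (hy : y ≠ 0) :
    inner ℝ (gradient U y) y = -α * U y := by
  have hopen : IsOpen {z : EuclideanSpace ℝ (Fin d) | z ≠ 0} := isOpen_ne
  have hdiff : DifferentiableAt ℝ U y :=
    ((hUC2.contDiffAt (hopen.mem_nhds hy)).differentiableAt (by norm_num))
  have hF : HasFDerivAt U (fderiv ℝ U y) y := hdiff.hasFDerivAt
  have hsm : HasDerivAt (fun c : ℝ => c • y) y (1:ℝ) := by
    simpa using (hasDerivAt_id (1:ℝ)).smul_const y
  have hF1 : HasFDerivAt U (fderiv ℝ U y) ((1:ℝ) • y) := by simpa [one_smul] using hF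
  have hcomp : HasDerivAt (fun c : ℝ => U (c • y)) (fderiv ℝ U y y) 1 :=
    hF1.comp_hasDerivAt (1:ℝ) hsm
  have hyn : (0:ℝ) < ‖y‖ := norm_pos_iff.mpr hy
  have heq : (fun c : ℝ => U (c • y)) =ᶠ[nhds (1:ℝ)] (fun c : ℝ => c ^ (-α) * U y) := by
    filter_upwards [isOpen_Ioi.mem_nhds (show (0:ℝ) < 1 by norm_num)] with c hc
    have hc0 : (0:ℝ) < c := hc
    have hcy : c • y ≠ 0 := smul_ne_zero hc0.ne' hy
    have hns : ‖c • y‖ = c * ‖y‖ := by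
      rw [norm_smul, Real.norm_eq_abs, abs_of_pos hc0]
    have hunit : (c * ‖y‖)⁻¹ • c • y = ‖y‖⁻¹ • y := by
      rw [smul_smul, mul_inv]
      rw [show c⁻¹ * ‖y‖⁻¹ * c = ‖y‖⁻¹ * (c⁻¹ * c) by ring, inv_mul_cancel₀ hc0.ne']
      simp
    rw [hUhom (c • y) hcy, hns, hunit, Real.mul_rpow hc0.le (norm_nonneg y),
      hUhom y hy]
    ring
  have h2 : HasDerivAt (fun c : ℝ => c ^ (-α) * U y) (-α * U y) 1 := by
    have := (Real.hasDerivAt_rpow_const (x := (1:ℝ)) (p := -α) (Or.inl one_ne_zero)).mul_const (U y)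
    simpa using this
  have huni : fderiv ℝ U y y = -α * U y := by
    have := hcomp.congr_of_eventuallyEq heq.symm
    exact this.unique h2
  rw [show gradient U y = (InnerProductSpace.toDual ℝ _).symm (fderiv ℝ U y) from rfl,
    InnerProductSpace.toDual_symm_apply, huni]

/-- For `Γ(t) = ½ r(t)^α (2h - ṙ(t)²)` along a solution of the anisotropic
Kepler problem one has `Γ̇ = -((2-α)/2) r^{α+1} ṙ |ṡ|²`. -/
theorem Gamma_deriv {d : ℕ} (hd : 2 ≤ d) (α h Tm Tp : ℝ)
    (hα : α ∈ Set.Ioo (0:ℝ) 2)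
    (U : EuclideanSpace ℝ (Fin d) → ℝ)
    (hUhom : ∀ y : EuclideanSpace ℝ (Fin d), y ≠ 0 →
      U y = ‖y‖ ^ (-α) * U (‖y‖⁻¹ • y))
    (hUC2 : ContDiffOn ℝ 2 U {y : EuclideanSpace ℝ (Fin d) | y ≠ 0})
    (hUpos : ∀ y : EuclideanSpace ℝ (Fin d), ‖y‖ = 1 → 0 < U y)
    (x x' : ℝ → EuclideanSpace ℝ (Fin d))
    (hx0 : ∀ t ∈ Set.Ioo Tm Tp, x t ≠ 0)
    (hx1 : ∀ t ∈ Set.Ioo Tm Tp, HasDerivAt x (x' t) t)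
    (hx2 : ∀ t ∈ Set.Ioo Tm Tp, HasDerivAt x' (gradient U (x t)) t)
    (hE : ∀ t ∈ Set.Ioo Tm Tp, (1/2) * ‖x' t‖^2 - U (x t) = h) :
    ∀ t ∈ Set.Ioo Tm Tp,
      deriv (fun τ => (1/2) * ‖x τ‖ ^ α *
          (2*h - (deriv (fun u => ‖x u‖) τ)^2)) t
        = -((2-α)/2) * ‖x t‖ ^ (α+1) * deriv (fun u => ‖x u‖) t *
            ‖deriv (fun u => ‖x u‖⁻¹ • x u) t‖^2 := by
  intro t ht
  have hr : (0:ℝ) < ‖x t‖ := norm_pos_iff.mpr (hx0 t ht)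
  -- derivative of the norm
  have hnorm : ∀ τ ∈ Set.Ioo Tm Tp,
      HasDerivAt (fun u => ‖x u‖) (⟪x τ, x' τ⟫ / ‖x τ‖) τ := by
    intro τ hτ
    have hrτ : (0:ℝ) < ‖x τ‖ := norm_pos_iff.mpr (hx0 τ hτ)
    have h1 : HasDerivAt (fun u => ‖x u‖^2) (2 * ⟪x τ, x' τ⟫) τ := (hx1 τ hτ).norm_sq
    have h2 := h1.sqrt (by positivity)
    have h3 : (fun u => Real.sqrt (‖x u‖^2)) = fun u => ‖x u‖ := by
      funext u; rw [Real.sqrt_sq (norm_nonneg _)]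
    rw [h3] at h2
    convert h2 using 1
    rw [Real.sqrt_sq hrτ.le]
    field_simp
  -- derivative of ⟪x, x'⟫
  have hp : HasDerivAt (fun τ => ⟪x τ, x' τ⟫)
      (⟪x t, gradient U (x t)⟫ + ⟪x' t, x' t⟫) t :=
    (hx1 t ht).inner ℝ (hx2 t ht)
  have hf : HasDerivAt (fun τ => ⟪x τ, x' τ⟫ / ‖x τ‖)
      (((⟪x t, gradient U (x t)⟫ + ⟪x' t, x' t⟫) * ‖x t‖
          - ⟪x t, x' t⟫ * (⟪x t, x' t⟫ / ‖x t‖)) / ‖x t‖ ^ 2) t :=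
    hp.div (hnorm t ht) hr.ne'
  -- rewrite the function whose derivative we take, on a neighborhood
  have hmem : Set.Ioo Tm Tp ∈ nhds t := isOpen_Ioo.mem_nhds ht
  have hEv : (fun τ => (1/2) * ‖x τ‖ ^ α * (2*h - (deriv (fun u => ‖x u‖) τ)^2))
      =ᶠ[nhds t] (fun τ => (1/2) * ‖x τ‖ ^ α * (2*h - (⟪x τ, x' τ⟫ / ‖x τ‖)^2)) := by
    filter_upwards [hmem] with τ hτ
    rw [(hnorm τ hτ).deriv]
  rw [hEv.deriv_eq]
  -- derivative of the left-hand side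
  have hrpow : HasDerivAt (fun τ => ‖x τ‖ ^ α)
      ((⟪x t, x' t⟫ / ‖x t‖) * α * ‖x t‖ ^ (α-1)) t :=
    (hnorm t ht).rpow_const (Or.inl hr.ne')
  have hsq : HasDerivAt (fun τ => 2*h - (⟪x τ, x' τ⟫ / ‖x τ‖)^2)
      (-((2:ℕ) * (⟪x t, x' t⟫ / ‖x t‖) ^ (2-1) *
        (((⟪x t, gradient U (x t)⟫ + ⟪x' t, x' t⟫) * ‖x t‖
          - ⟪x t, x' t⟫ * (⟪x t, x' t⟫ / ‖x t‖)) / ‖x t‖ ^ 2))) t :=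
    (hf.pow 2).const_sub (2*h)
  have hG : HasDerivAt (fun τ => (1/2) * ‖x τ‖ ^ α * (2*h - (⟪x τ, x' τ⟫ / ‖x τ‖)^2))
      ((1/2 * ((⟪x t, x' t⟫ / ‖x t‖) * α * ‖x t‖ ^ (α-1)))
          * (2*h - (⟪x t, x' t⟫ / ‖x t‖)^2)
        + (1/2 * ‖x t‖ ^ α) *
          (-((2:ℕ) * (⟪x t, x' t⟫ / ‖x t‖) ^ (2-1) *
            (((⟪x t, gradient U (x t)⟫ + ⟪x' t, x' t⟫) * ‖x t‖
              - ⟪x t, x' t⟫ * (⟪x t, x' t⟫ / ‖x t‖)) / ‖x t‖ ^ 2)))) t :=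
    (hrpow.const_mul (1/2:ℝ)).mul hsq
  rw [hG.deriv]
  -- derivative of the unit vector
  have hinv : HasDerivAt (fun u => ‖x u‖⁻¹) (-(⟪x t, x' t⟫ / ‖x t‖) / ‖x t‖^2) t :=
    (hnorm t ht).inv hr.ne'
  have hs : HasDerivAt (fun u => ‖x u‖⁻¹ • x u)
      (‖x t‖⁻¹ • x' t + (-(⟪x t, x' t⟫ / ‖x t‖) / ‖x t‖^2) • x t) t :=
    hinv.smul (hx1 t ht)
  rw [hs.deriv, (hnorm t ht).deriv]
  -- expand the squared norm of the unit-vector derivative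
  have hwsq : ‖‖x t‖⁻¹ • x' t + (-(⟪x t, x' t⟫ / ‖x t‖) / ‖x t‖^2) • x t‖^2
      = ‖x t‖⁻¹ * ‖x t‖⁻¹ * ‖x' t‖^2
        + 2 * (‖x t‖⁻¹ * (-(⟪x t, x' t⟫ / ‖x t‖) / ‖x t‖^2) * ⟪x t, x' t⟫)
        + (-(⟪x t, x' t⟫ / ‖x t‖) / ‖x t‖^2)^2 * ‖x t‖^2 := by
    rw [← real_inner_self_eq_norm_sq]
    simp only [inner_add_left, inner_add_right, real_inner_smul_left, real_inner_smul_right,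
      real_inner_comm (x' t) (x t)]
    rw [real_inner_self_eq_norm_sq (x' t), real_inner_self_eq_norm_sq (x t)]
    ring
  rw [hwsq]
  -- Euler identity and energy
  have heuler : ⟪x t, gradient U (x t)⟫ = -α * U (x t) := by
    rw [real_inner_comm]
    exact euler_hom α U hUhom hUC2 (x t) (hx0 t ht)
  have hvv : ⟪x' t, x' t⟫ = ‖x' t‖^2 := real_inner_self_eq_norm_sq _
  have h2h : 2*h = ‖x' t‖^2 - 2 * U (x t) := by
    have := hE t ht; linarith
  have hrpow1 : ‖x t‖ ^ (α - 1) = ‖x t‖ ^ α / ‖x t‖ := by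
    rw [Real.rpow_sub hr, Real.rpow_one]
  have hrpow2 : ‖x t‖ ^ (α + 1) = ‖x t‖ ^ α * ‖x t‖ := by
    rw [Real.rpow_add hr, Real.rpow_one]
  rw [heuler, hvv, h2h, hrpow1, hrpow2]
  have hA : (0:ℝ) < ‖x t‖ ^ α := Real.rpow_pos_of_pos hr α
  set A := ‖x t‖ ^ α with hAdef
  set R := ‖x t‖ with hRdef
  set P := ⟪x t, x' t⟫ with hPdef
  set N := ‖x' t‖ with hNdef
  have hR0 : R ≠ 0 := hr.ne'
  push_cast
  field_simp
  ring
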